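/- Evaluation is invariant under standardization for the head-insertion encoding: for every nonempty word a of distinct positive integers, ε(h(a)) = ε(h(std(a))). -/

import Mathlib

/-- Indexed terms of the language `L^I`: generators `2^k` and partial compositions. -/
inductive Trm : Type
  | gen : ℕ → Trm
  | comp : Trm → ℕ → Trm → Trm
deriving DecidableEq

namespace Trm

/-- Arity `|A|`. -/
def arity : Trm → ℕ
  | gen _ => 2
  | comp A _ B => A.arity + B.arity - 1

/-- Set of indices occurring in a term. -/
def ind : Trm → Finset ℕ
  | gen k => {k}
  | comp A _ B => A.ind ∪ B.ind

/-- Root index. -/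
def root : Trm → ℕ
  | gen k => k
  | comp A _ _ => A.root

/-- Number of occurrences of the generator. -/
def countGen : Trm → ℕ
  | gen _ => 1
  | comp A _ B => A.countGen + B.countGen

end Trm

/-- The congruence `=_I` generated by (assoc1) and (assoc2). -/
inductive IEq : Trm → Trm → Prop
  | refl (A : Trm) : IEq A A
  | symm {A B} : IEq A B → IEq B A
  | trans {A B C} : IEq A B → IEq B C → IEq A C
  | congr {A A' B B'} (n : ℕ) : IEq A A' → IEq B B' →
      IEq (Trm.comp A n B) (Trm.comp A' n B')
  | assoc1 (A B C : Trm) (n m : ℕ) : n ≤ m → m < n + B.arity →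
      IEq (Trm.comp (Trm.comp A n B) m C) (Trm.comp A n (Trm.comp B (m - n + 1) C))
  | assoc2 (A B C : Trm) (n m : ℕ) : n + B.arity ≤ m →
      IEq (Trm.comp (Trm.comp A n B) m C) (Trm.comp (Trm.comp A (m - B.arity + 1) C) n B)

/-- Planar binary trees. -/
inductive BT : Type
  | leaf : BT
  | node : BT → BT → BT
deriving DecidableEq

namespace BT

/-- Number of leaves. -/
def leaves : BT → ℕ
  | leaf => 1
  | node l r => l.leaves + r.leaves

/-- Graft `S` at the `i`-th leaf (1-indexed) of a tree. -/
def graft : BT → ℕ → BT → BT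
  | leaf, _, S => S
  | node l r, i, S =>
    if i ≤ l.leaves then node (l.graft i S) r else node l (r.graft (i - l.leaves) S)

end BT

/-- Evaluation `ε` of indexed terms to planar binary trees. -/
def Trm.eval : Trm → BT
  | Trm.gen _ => BT.node BT.leaf BT.leaf
  | Trm.comp A i B => A.eval.graft i B.eval

/-- `l`-factors. -/
inductive LFactor : Trm → Prop
  | gen (k : ℕ) : LFactor (Trm.gen k)
  | step {A : Trm} (j : ℕ) : LFactor A → j ∉ A.ind →
      LFactor (Trm.comp A ((A.ind.filter (· < j)).card + 1) (Trm.gen j))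

/-- Auxiliary for the head-insertion encoding: `done` is the list of already
inserted letters. -/
def hAux : Trm → List ℕ → List ℕ → Trm
  | A, _, [] => A
  | A, done, y :: rest =>
      hAux (Trm.comp A ((done.filter (· < y)).length + 1) (Trm.gen y)) (done ++ [y]) rest

/-- Head-insertion encoding `h` (junk value on the empty word). -/
def hWord : List ℕ → Trm
  | [] => Trm.gen 0
  | x :: rest => hAux (Trm.gen x) [x] rest

/-- `u_a(x)`: number of letters to the left of `x` in `a` that are greater than `x`. -/
def uCount (a : List ℕ) (x : ℕ) : ℕ := ((a.takeWhile (· ≠ x)).filter (x < ·)).length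

/-- Decreasing rearrangement of a word. -/
def sortDesc (a : List ℕ) : List ℕ := (a.mergeSort (· ≤ ·)).reverse

/-- Decreasing encoding `f` (junk value on the empty word). -/
def fWord (a : List ℕ) : Trm :=
  match sortDesc a with
  | [] => Trm.gen 0
  | k :: rest => rest.foldl (fun A x => Trm.comp A (uCount a x + 1) (Trm.gen x)) (Trm.gen k)

/-- Standardization of a word of distinct integers. -/
def std (a : List ℕ) : List ℕ := a.map (fun x => (a.filter (· ≤ x)).length)

/-- Tonks' vertex map, splitting form `φ`. -/
def tonksPhi (a : List ℕ) : BT :=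
  match ha : a.getLast? with
  | none => BT.leaf
  | some x =>
      BT.node (tonksPhi (std (a.filter (· < x)))) (tonksPhi (std (a.filter (x < ·))))
termination_by a.length
decreasing_by
  · have hx : x ∈ a := List.mem_of_mem_getLast? (Option.mem_def.mpr ha)
    have : (a.filter (· < x)).length < a.length := by
      apply List.length_filter_lt_length_iff_exists.2
      exact ⟨x, hx, by simp⟩
    simp only [std, List.length_map, List.length_unattach]
    rw [← List.length_attach (l := a)]
    apply List.length_filter_lt_length_iff_exists.2
    exact ⟨⟨x, hx⟩, List.mem_attach _ _, by simp⟩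
  · have hx : x ∈ a := List.mem_of_mem_getLast? (Option.mem_def.mpr ha)
    have : (a.filter (x < ·)).length < a.length := by
      apply List.length_filter_lt_length_iff_exists.2
      exact ⟨x, hx, by simp⟩
    simp only [std, List.length_map, List.length_unattach]
    rw [← List.length_attach (l := a)]
    apply List.length_filter_lt_length_iff_exists.2
    exact ⟨⟨x, hx⟩, List.mem_attach _ _, by simp⟩

/-- Tonks' vertex map, head-grafting form `φ̂`. -/
def phiHat : List ℕ → BT
  | [] => BT.leaf
  | x :: rest => (phiHat (std rest)).graft x (BT.node BT.leaf BT.leaf)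
termination_by a => a.length
decreasing_by
  simp [std]

/-- The Loday–Ronco map `ψ`. -/
def lodayPsi (a : List ℕ) : BT :=
  match hm : a.maximum with
  | none => BT.leaf
  | some m =>
      let i := a.idxOf m
      BT.node (lodayPsi (std (a.take i))) (lodayPsi (std (a.drop (i + 1))))
termination_by a.length
decreasing_by
  · have hmem : m ∈ a := List.maximum_mem hm
    have hi : a.idxOf m < a.length := List.idxOf_lt_length_iff.2 hmem
    simp only [std, List.length_map, List.length_take]
    omega
  · have : a ≠ [] := by rintro rfl; simp [List.maximum] at hm
    have : 0 < a.length := List.length_pos_iff.2 this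
    simp only [std, List.length_map, List.length_drop]
    omega

/-- Inverse of a permutation word on `{1,…,n}`. -/
def invWord (π : List ℕ) : List ℕ :=
  (List.range π.length).map (fun j => π.idxOf (j + 1) + 1)

/-- One Tamari (right rotation) step, at any subtree. -/
inductive TamariStep : BT → BT → Prop
  | rot (X Y Z : BT) : TamariStep (BT.node (BT.node X Y) Z) (BT.node X (BT.node Y Z))
  | left {l l'} (r : BT) : TamariStep l l' → TamariStep (BT.node l r) (BT.node l' r)
  | right (l : BT) {r r'} : TamariStep r r' → TamariStep (BT.node l r) (BT.node l r')

/-- The Tamari order. -/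
def TamariLE : BT → BT → Prop := Relation.ReflTransGen TamariStep

/-- The strict Tamari order. -/
def TamariLT : BT → BT → Prop := Relation.TransGen TamariStep

/-- One cover of the right weak Bruhat order on words. -/
inductive BruhatStep : List ℕ → List ℕ → Prop
  | swap (α : List ℕ) {u v : ℕ} (β : List ℕ) : u < v →
      BruhatStep (α ++ u :: v :: β) (α ++ v :: u :: β)

/-- The right weak Bruhat order on words. -/
def BruhatLE : List ℕ → List ℕ → Prop := Relation.ReflTransGen BruhatStep

/-- Head-insertion index `k(a; σ)`. -/
def kIdx (a : ℕ) (σ : List ℕ) : ℕ := 1 + (σ.filter (· < a)).length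

lemma hAux_eval_congr (g : ℕ → ℕ) :
    ∀ (rest done : List ℕ) (A A' : Trm),
      A.eval = A'.eval →
      (∀ x ∈ done ++ rest, ∀ y ∈ done ++ rest, (x < y ↔ g x < g y)) →
      (hAux A done rest).eval = (hAux A' (done.map g) (rest.map g)).eval := by
  intro rest
  induction rest with
  | nil => intro done A A' hA _; simpa [hAux] using hA
  | cons y r ih =>
    intro done A A' hA hord
    simp only [hAux, List.map_cons]
    have hk : ((done.map g).filter (· < g y)).length = (done.filter (· < y)).length := by
      rw [List.filter_map, List.length_map]
      congr 1
      apply List.filter_congr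
      intro x hx
      have := hord x (by simp [hx]) y (by simp)
      simp only [Function.comp, decide_eq_decide]
      omega
    rw [hk]
    have heq : (done.map g) ++ [g y] = (done ++ [y]).map g := by simp
    rw [heq]
    apply ih
    · simp [Trm.eval, hA]
    · intro x hx z hz
      apply hord <;> simp at hx hz ⊢ <;> tauto

theorem eval_h_std (a : List ℕ) (ha : a ≠ []) (hnd : a.Nodup) (hpos : ∀ x ∈ a, 0 < x) :
    (hWord a).eval = (hWord (std a)).eval := by
  obtain ⟨x, rest, rfl⟩ := List.exists_cons_of_ne_nil ha
  set f : ℕ → ℕ := fun z => ((x :: rest).filter (· ≤ z)).length with hf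
  have key : ∀ u ∈ x :: rest, ∀ v ∈ x :: rest, (u < v ↔ f u < f v) := by
    intro u hu v hv
    constructor
    · intro huv
      have hsub : List.Sublist ((x :: rest).filter (· ≤ u)) ((x :: rest).filter (· ≤ v)) :=
        List.monotone_filter_right _ (by intro z hz; simp at hz ⊢; omega)
      have hle := hsub.length_le
      rcases lt_or_eq_of_le hle with h | h
      · exact h
      · exfalso
        have := hsub.eq_of_length h
        have hv1 : v ∈ (x :: rest).filter (· ≤ v) := by
          simp [List.mem_filter, hv]
        rw [← this] at hv1
        simp [List.mem_filter] at hv1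
        omega
    · intro hfv
      by_contra h
      push_neg at h
      have hsub : List.Sublist ((x :: rest).filter (· ≤ v)) ((x :: rest).filter (· ≤ u)) :=
        List.monotone_filter_right _ (by intro z hz; simp at hz ⊢; omega)
      have := hsub.length_le
      simp only [hf] at hfv
      omega
  have hstd : std (x :: rest) = f x :: rest.map f := by
    simp [std, hf]
  rw [hstd]
  simp only [hWord]
  have : [f x] = [x].map f := by simp
  rw [this]
  exact hAux_eval_congr f rest [x] _ _ rfl (by simpa using key)
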